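/- Let G = (V, E) be a finite simple graph without isolated vertices with V = {v_1, …, v_n}, and let G' = (V', E') be the graph with V' = V ∪ {a_1, …, a_n} ∪ {s, t, x, y, w, z} (all new vertices distinct from V and from each other) and E' = E ∪ {a_i v_i : i ∈ [n]} ∪ {v_i s : i ∈ [n]} ∪ {a_i x : i ∈ [n]} ∪ {a_i z : i ∈ [n]} ∪ {st, xy, wz}. Then for every integer k, G has a dominating set of cardinality at most k if and only if G' has a co-secure dominating set of cardinality at most k + 3. -/
import Mathlib


/-- `D` is a dominating set of `G`: every vertex outside `D` has a neighbor in `D`. -/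
def IsDomSet {V : Type*} (G : SimpleGraph V) (D : Set V) : Prop :=
  ∀ v ∉ D, ∃ u ∈ D, G.Adj u v

/-- `S` is a co-secure dominating set of `G`. -/
def IsCSDS {V : Type*} (G : SimpleGraph V) (S : Set V) : Prop :=
  IsDomSet G S ∧ ∀ u ∈ S, ∃ v, v ∉ S ∧ G.Adj u v ∧ IsDomSet G (S \ {u} ∪ {v})

/- The vertex set of the constructed graph `G'` is `V ⊕ V ⊕ Fin 6`, where
`Sum.inl v` is the original vertex `v`, `Sum.inr (Sum.inl v)` is the new
pendant-type vertex `a_v` attached to `v`, and `Sum.inr (Sum.inr i)` encodes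
the six new vertices `s = 0`, `t = 1`, `x = 2`, `y = 3`, `w = 4`, `z = 5`. -/

/-- The edges of `G'`:
`E' = E ∪ {a_i v_i} ∪ {v_i s} ∪ {a_i x} ∪ {a_i z} ∪ {st, xy, wz}`. -/
def pebRel {V : Type*} (G : SimpleGraph V) :
    (V ⊕ V ⊕ Fin 6) → (V ⊕ V ⊕ Fin 6) → Prop
  | Sum.inl u, Sum.inl v => G.Adj u v                      -- original edges of G
  | Sum.inr (Sum.inl a), Sum.inl v => a = v                -- a_i v_i
  | Sum.inl _, Sum.inr (Sum.inr i) => i = 0                -- v_i s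
  | Sum.inr (Sum.inl _), Sum.inr (Sum.inr i) => i = 2 ∨ i = 5  -- a_i x and a_i z
  | Sum.inr (Sum.inr i), Sum.inr (Sum.inr j) =>
      (i = 0 ∧ j = 1) ∨ (i = 2 ∧ j = 3) ∨ (i = 4 ∧ j = 5)  -- st, xy, wz
  | _, _ => False

/-- The constructed graph `G'`. -/
def pebGraph {V : Type*} (G : SimpleGraph V) : SimpleGraph (V ⊕ V ⊕ Fin 6) :=
  SimpleGraph.fromRel (pebRel G)

section Aux

variable {V : Type*} {G : SimpleGraph V}

/-- The six special vertices. -/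
abbrev gS {V : Type*} : V ⊕ V ⊕ Fin 6 := .inr (.inr 0)
abbrev gT {V : Type*} : V ⊕ V ⊕ Fin 6 := .inr (.inr 1)
abbrev gX {V : Type*} : V ⊕ V ⊕ Fin 6 := .inr (.inr 2)
abbrev gY {V : Type*} : V ⊕ V ⊕ Fin 6 := .inr (.inr 3)
abbrev gW {V : Type*} : V ⊕ V ⊕ Fin 6 := .inr (.inr 4)
abbrev gZ {V : Type*} : V ⊕ V ⊕ Fin 6 := .inr (.inr 5)

lemma padj {a b} : (pebGraph G).Adj a b ↔ a ≠ b ∧ (pebRel G a b ∨ pebRel G b a) :=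
  SimpleGraph.fromRel_adj _ _ _

lemma adj_SL (v : V) : (pebGraph G).Adj gS (.inl v) :=
  padj.2 ⟨by simp, Or.inr rfl⟩
lemma adj_AL (v : V) : (pebGraph G).Adj (.inr (.inl v)) (.inl v) :=
  padj.2 ⟨by simp, Or.inl rfl⟩
lemma adj_XA (v : V) : (pebGraph G).Adj gX (.inr (.inl v)) :=
  padj.2 ⟨by simp, Or.inr (Or.inl rfl)⟩
lemma adj_ZA (v : V) : (pebGraph G).Adj gZ (.inr (.inl v)) :=
  padj.2 ⟨by simp, Or.inr (Or.inr rfl)⟩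
lemma adj_ST : (pebGraph G).Adj gS gT :=
  padj.2 ⟨by simp, Or.inl (Or.inl ⟨rfl, rfl⟩)⟩
lemma adj_XY : (pebGraph G).Adj gX gY :=
  padj.2 ⟨by simp, Or.inl (Or.inr (Or.inl ⟨rfl, rfl⟩))⟩
lemma adj_ZW : (pebGraph G).Adj gZ gW :=
  padj.2 ⟨by simp, Or.inr (Or.inr (Or.inr ⟨rfl, rfl⟩))⟩
lemma adj_LL {u v : V} (h : G.Adj u v) : (pebGraph G).Adj (.inl u) (.inl v) :=
  padj.2 ⟨by simp [h.ne], Or.inl h⟩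

lemma nbr_L {c : V ⊕ V ⊕ Fin 6} {v : V} (h : (pebGraph G).Adj c (.inl v)) :
    (∃ u, c = .inl u ∧ G.Adj u v) ∨ c = .inr (.inl v) ∨ c = gS := by
  obtain ⟨hne, h | h⟩ := padj.1 h
  · rcases c with u | a | i
    · exact Or.inl ⟨u, rfl, h⟩
    · simp only [pebRel] at h; subst h; exact Or.inr (Or.inl rfl)
    · simp only [pebRel] at h
  · rcases c with u | a | i
    · exact Or.inl ⟨u, rfl, h.symm⟩
    · simp only [pebRel] at h
    · simp only [pebRel] at h; subst h; exact Or.inr (Or.inr rfl)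

lemma nbr_T {c : V ⊕ V ⊕ Fin 6} (h : (pebGraph G).Adj c gT) : c = gS := by
  obtain ⟨hne, h | h⟩ := padj.1 h
  · rcases c with u | a | i <;> simp only [pebRel] at h
    · exact absurd h (by decide)
    · rcases h with h | h <;> exact absurd h (by decide)
    · rcases h with ⟨h1, -⟩ | ⟨-, h⟩ | ⟨-, h⟩
      · subst h1; rfl
      · exact absurd h (by decide)
      · exact absurd h (by decide)
  · rcases c with u | a | i <;> simp only [pebRel] at h
    rcases h with ⟨h1, -⟩ | ⟨h1, -⟩ | ⟨h1, -⟩ <;> exact absurd h1 (by decide)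

lemma nbr_Y {c : V ⊕ V ⊕ Fin 6} (h : (pebGraph G).Adj c gY) : c = gX := by
  obtain ⟨hne, h | h⟩ := padj.1 h
  · rcases c with u | a | i <;> simp only [pebRel] at h
    · exact absurd h (by decide)
    · rcases h with h | h <;> exact absurd h (by decide)
    · rcases h with ⟨-, h⟩ | ⟨h1, -⟩ | ⟨-, h⟩
      · exact absurd h (by decide)
      · subst h1; rfl
      · exact absurd h (by decide)
  · rcases c with u | a | i <;> simp only [pebRel] at h
    rcases h with ⟨h1, -⟩ | ⟨h1, -⟩ | ⟨h1, -⟩ <;> exact absurd h1 (by decide)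

lemma nbr_W {c : V ⊕ V ⊕ Fin 6} (h : (pebGraph G).Adj c gW) : c = gZ := by
  obtain ⟨hne, h | h⟩ := padj.1 h
  · rcases c with u | a | i <;> simp only [pebRel] at h
    · exact absurd h (by decide)
    · rcases h with h | h <;> exact absurd h (by decide)
    · rcases h with ⟨-, h⟩ | ⟨-, h⟩ | ⟨-, h⟩ <;> exact absurd h (by decide)
  · rcases c with u | a | i <;> simp only [pebRel] at h
    rcases h with ⟨h1, -⟩ | ⟨h1, -⟩ | ⟨-, h1⟩
    · exact absurd h1 (by decide)
    · exact absurd h1 (by decide)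
    · subst h1; rfl

lemma nbr_S {c : V ⊕ V ⊕ Fin 6} (h : (pebGraph G).Adj gS c) :
    c = gT ∨ ∃ u, c = .inl u := by
  obtain ⟨hne, h | h⟩ := padj.1 h
  · rcases c with u | a | i <;> simp only [pebRel] at h
    rcases h with ⟨-, h1⟩ | ⟨h1, -⟩ | ⟨h1, -⟩
    · subst h1; exact Or.inl rfl
    · exact absurd h1 (by decide)
    · exact absurd h1 (by decide)
  · rcases c with u | a | i <;> simp only [pebRel] at h
    · exact Or.inr ⟨u, rfl⟩
    · rcases h with h | h <;> exact absurd h (by decide)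
    · rcases h with ⟨-, h1⟩ | ⟨-, h1⟩ | ⟨-, h1⟩ <;> exact absurd h1 (by decide)

/-- Any set containing `s, x, z` dominates `pebGraph G`. -/
lemma dom_SXZ {T : Set (V ⊕ V ⊕ Fin 6)} (h0 : gS ∈ T) (h2 : gX ∈ T) (h5 : gZ ∈ T) :
    IsDomSet (pebGraph G) T := by
  rintro (v | a | i) hb
  · exact ⟨gS, h0, adj_SL v⟩
  · exact ⟨gX, h2, adj_XA a⟩
  · fin_cases i
    · exact absurd h0 hb
    · exact ⟨gS, h0, adj_ST⟩
    · exact absurd h2 hb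
    · exact ⟨gX, h2, adj_XY⟩
    · exact ⟨gZ, h5, adj_ZW⟩
    · exact absurd h5 hb

lemma dom_T {D : Set V} {T : Set (V ⊕ V ⊕ Fin 6)} (hD : IsDomSet G D)
    (hDT : ∀ v ∈ D, Sum.inl v ∈ T) (h1 : gT ∈ T) (h2 : gX ∈ T) (h5 : gZ ∈ T) :
    IsDomSet (pebGraph G) T := by
  rintro (v | a | i) hb
  · by_cases hv : v ∈ D
    · exact absurd (hDT v hv) hb
    · obtain ⟨u, hu, huv⟩ := hD v hv
      exact ⟨.inl u, hDT u hu, adj_LL huv⟩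
  · exact ⟨gX, h2, adj_XA a⟩
  · fin_cases i
    · exact ⟨gT, h1, adj_ST.symm⟩
    · exact absurd h1 hb
    · exact absurd h2 hb
    · exact ⟨gX, h2, adj_XY⟩
    · exact ⟨gZ, h5, adj_ZW⟩
    · exact absurd h5 hb

lemma dom_Y {T : Set (V ⊕ V ⊕ Fin 6)} (h0 : gS ∈ T) (h3 : gY ∈ T) (h5 : gZ ∈ T) :
    IsDomSet (pebGraph G) T := by
  rintro (v | a | i) hb
  · exact ⟨gS, h0, adj_SL v⟩
  · exact ⟨gZ, h5, adj_ZA a⟩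
  · fin_cases i
    · exact absurd h0 hb
    · exact ⟨gS, h0, adj_ST⟩
    · exact ⟨gY, h3, adj_XY.symm⟩
    · exact absurd h3 hb
    · exact ⟨gZ, h5, adj_ZW⟩
    · exact absurd h5 hb

lemma dom_W {T : Set (V ⊕ V ⊕ Fin 6)} (h0 : gS ∈ T) (h2 : gX ∈ T) (h4 : gW ∈ T) :
    IsDomSet (pebGraph G) T := by
  rintro (v | a | i) hb
  · exact ⟨gS, h0, adj_SL v⟩
  · exact ⟨gX, h2, adj_XA a⟩
  · fin_cases i
    · exact absurd h0 hb
    · exact ⟨gS, h0, adj_ST⟩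
    · exact absurd h2 hb
    · exact ⟨gX, h2, adj_XY⟩
    · exact absurd h4 hb
    · exact ⟨gW, h4, adj_ZW.symm⟩

lemma le_ncard_of_three {α : Type*} {s : Set α} {a b c : α} (hs : s.Finite)
    (ha : a ∈ s) (hb : b ∈ s) (hc : c ∈ s)
    (hab : a ≠ b) (hac : a ≠ c) (hbc : b ≠ c) : 3 ≤ s.ncard := by
  have hsub : ({a, b, c} : Set α) ⊆ s := by
    rintro x (rfl | rfl | rfl) <;> assumption
  have h3 : ({a, b, c} : Set α).ncard = 3 := by
    rw [Set.ncard_insert_of_notMem (by simp [hab, hac]) (Set.toFinite _),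
      Set.ncard_insert_of_notMem (by simp [hbc]) (Set.toFinite _), Set.ncard_singleton]
  calc 3 = ({a, b, c} : Set α).ncard := h3.symm
    _ ≤ s.ncard := Set.ncard_le_ncard hsub hs

lemma le_ncard_of_four {α : Type*} {s : Set α} {a b c d : α} (hs : s.Finite)
    (ha : a ∈ s) (hb : b ∈ s) (hc : c ∈ s) (hd : d ∈ s)
    (hab : a ≠ b) (hac : a ≠ c) (had : a ≠ d) (hbc : b ≠ c) (hbd : b ≠ d)
    (hcd : c ≠ d) : 4 ≤ s.ncard := by
  have hsub : ({a, b, c, d} : Set α) ⊆ s := by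
    rintro x (rfl | rfl | rfl | rfl) <;> assumption
  have h4 : ({a, b, c, d} : Set α).ncard = 4 := by
    rw [Set.ncard_insert_of_notMem (by simp [hab, hac, had]) (Set.toFinite _),
      Set.ncard_insert_of_notMem (by simp [hbc, hbd]) (Set.toFinite _),
      Set.ncard_insert_of_notMem (by simp [hcd]) (Set.toFinite _), Set.ncard_singleton]
  calc 4 = ({a, b, c, d} : Set α).ncard := h4.symm
    _ ≤ s.ncard := Set.ncard_le_ncard hsub hs

end Aux

theorem stmt8 {V : Type*} [Fintype V] (G : SimpleGraph V)
    (hiso : ∀ v : V, ∃ u : V, G.Adj v u) (k : ℕ) :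
    (∃ D : Set V, IsDomSet G D ∧ D.ncard ≤ k) ↔
    (∃ S : Set (V ⊕ V ⊕ Fin 6), IsCSDS (pebGraph G) S ∧ S.ncard ≤ k + 3) := by
  classical
  constructor
  · -- forward
    rintro ⟨D, hD, hcard⟩
    refine ⟨Sum.inl '' D ∪ {gS, gX, gZ}, ⟨?_, ?_⟩, ?_⟩
    · exact dom_SXZ (Or.inr (by simp)) (Or.inr (by simp)) (Or.inr (by simp))
    · -- co-secure
      intro u hu
      have hDS : ∀ v ∈ D, (Sum.inl v : V ⊕ V ⊕ Fin 6) ∈ Sum.inl '' D ∪ {gS, gX, gZ} :=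
        fun v hv => Or.inl ⟨v, hv, rfl⟩
      have haS : ∀ w : V, (Sum.inr (Sum.inl w) : V ⊕ V ⊕ Fin 6) ∉
          Sum.inl '' D ∪ {gS, gX, gZ} := by
        rintro w (⟨u, -, h⟩ | h)
        · simp at h
        · simp at h
      rcases hu with ⟨v, hv, rfl⟩ | hu
      · -- u = inl v : swap with a_v
        refine ⟨.inr (.inl v), haS v, (adj_AL v).symm, ?_⟩
        refine dom_SXZ ?_ ?_ ?_ <;>
          exact Or.inl ⟨Or.inr (by simp), by simp⟩
      · rcases hu with rfl | rfl | rfl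
        · -- u = gS : swap with gT
          have hTn : (gT : V ⊕ V ⊕ Fin 6) ∉ Sum.inl '' D ∪ {gS, gX, gZ} := by
            rintro (⟨u, -, h⟩ | h) <;> simp at h
          refine ⟨gT, hTn, adj_ST, ?_⟩
          refine dom_T hD (fun v hv => Or.inl ⟨Or.inl ⟨v, hv, rfl⟩, by simp⟩)
            (Or.inr rfl) (Or.inl ⟨Or.inr (by simp), by simp⟩)
            (Or.inl ⟨Or.inr (by simp), by simp⟩)
        · -- u = gX : swap with gY
          have hYn : (gY : V ⊕ V ⊕ Fin 6) ∉ Sum.inl '' D ∪ {gS, gX, gZ} := by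
            rintro (⟨u, -, h⟩ | h) <;> simp at h
          refine ⟨gY, hYn, adj_XY, ?_⟩
          refine dom_Y (Or.inl ⟨Or.inr (by simp), by simp⟩) (Or.inr rfl)
            (Or.inl ⟨Or.inr (by simp), by simp⟩)
        · -- u = gZ : swap with gW
          have hWn : (gW : V ⊕ V ⊕ Fin 6) ∉ Sum.inl '' D ∪ {gS, gX, gZ} := by
            rintro (⟨u, -, h⟩ | h) <;> simp at h
          refine ⟨gW, hWn, adj_ZW, ?_⟩
          refine dom_W (Or.inl ⟨Or.inr (by simp), by simp⟩)
            (Or.inl ⟨Or.inr (by simp), by simp⟩) (Or.inr rfl)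
    · -- cardinality
      have h1 : (Sum.inl '' D ∪ ({gS, gX, gZ} : Set (V ⊕ V ⊕ Fin 6))).ncard ≤
          (Sum.inl '' D).ncard + ({gS, gX, gZ} : Set (V ⊕ V ⊕ Fin 6)).ncard :=
        Set.ncard_union_le _ _
      have h2 : (Sum.inl '' D : Set (V ⊕ V ⊕ Fin 6)).ncard = D.ncard :=
        Set.ncard_image_of_injective _ Sum.inl_injective
      have h3 : ({gS, gX, gZ} : Set (V ⊕ V ⊕ Fin 6)).ncard ≤ 3 := by
        calc ({gS, gX, gZ} : Set (V ⊕ V ⊕ Fin 6)).ncard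
            ≤ ({gX, gZ} : Set (V ⊕ V ⊕ Fin 6)).ncard + 1 := Set.ncard_insert_le _ _
          _ ≤ (({gZ} : Set (V ⊕ V ⊕ Fin 6)).ncard + 1) + 1 := by
              exact Nat.add_le_add_right (Set.ncard_insert_le _ _) 1
          _ = 3 := by rw [Set.ncard_singleton]
      omega
  · -- backward
    rintro ⟨S, ⟨hdom, hcs⟩, hcard⟩
    set Gad : Set (V ⊕ V ⊕ Fin 6) := Set.range (fun i => Sum.inr (Sum.inr i)) with hGad
    set base : Set V := {v | Sum.inl v ∈ S ∨ Sum.inr (Sum.inl v) ∈ S} with hbase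
    -- base is bounded by the non-gadget part of S
    have hbase_le : base.ncard ≤ (S \ Gad).ncard := by
      refine Set.ncard_le_ncard_of_injOn
        (fun v => if Sum.inl v ∈ S then Sum.inl v else Sum.inr (Sum.inl v)) ?_ ?_
        (Set.toFinite _)
      · intro v hv
        by_cases h : Sum.inl v ∈ S
        · simp only [h, if_pos]
          exact ⟨h, by rintro ⟨i, hi⟩; simp at hi⟩
        · simp only [h, if_neg, if_false]
          refine ⟨hv.resolve_left h, by rintro ⟨i, hi⟩; simp at hi⟩
      · intro v₁ h₁ v₂ h₂ heq
        by_cases k₁ : Sum.inl v₁ ∈ S <;> by_cases k₂ : Sum.inl v₂ ∈ S <;>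
          simp [k₁, k₂] at heq <;> exact heq
    have hsplit : (S ∩ Gad).ncard + (S \ Gad).ncard = S.ncard :=
      Set.ncard_inter_add_ncard_diff_eq_ncard S Gad (Set.toFinite _)
    -- one of s, t ∈ S; one of x, y ∈ S; one of w, z ∈ S
    have hST : (gS : V ⊕ V ⊕ Fin 6) ∈ S ∨ gT ∈ S := by
      by_cases h : (gT : V ⊕ V ⊕ Fin 6) ∈ S
      · exact Or.inr h
      · obtain ⟨c, hc, hadj⟩ := hdom gT h
        exact Or.inl (nbr_T hadj ▸ hc)
    have hXY : (gX : V ⊕ V ⊕ Fin 6) ∈ S ∨ gY ∈ S := by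
      by_cases h : (gY : V ⊕ V ⊕ Fin 6) ∈ S
      · exact Or.inr h
      · obtain ⟨c, hc, hadj⟩ := hdom gY h
        exact Or.inl (nbr_Y hadj ▸ hc)
    have hWZ : (gW : V ⊕ V ⊕ Fin 6) ∈ S ∨ gZ ∈ S := by
      by_cases h : (gW : V ⊕ V ⊕ Fin 6) ∈ S
      · exact Or.inl h
      · obtain ⟨c, hc, hadj⟩ := hdom gW h
        exact Or.inr (nbr_W hadj ▸ hc)
    have hgadmem : ∀ i : Fin 6, (Sum.inr (Sum.inr i) : V ⊕ V ⊕ Fin 6) ∈ Gad :=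
      fun i => ⟨i, rfl⟩
    -- helper producing an element of S ∩ Gad in each pair
    by_cases hSin : (gS : V ⊕ V ⊕ Fin 6) ∈ S
    case neg =>
      -- s ∉ S : base dominates by plain domination
      have hbdom : IsDomSet G base := by
        intro v hv
        have hvS : (Sum.inl v : V ⊕ V ⊕ Fin 6) ∉ S := fun h => hv (Or.inl h)
        obtain ⟨c, hc, hadj⟩ := hdom _ hvS
        rcases nbr_L hadj with ⟨u, rfl, huv⟩ | rfl | rfl
        · exact ⟨u, Or.inl hc, huv⟩
        · exact absurd hc (fun h => hv (Or.inr hc))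
        · exact absurd hc hSin
      have h3 : 3 ≤ (S ∩ Gad).ncard := by
        have hT : (gT : V ⊕ V ⊕ Fin 6) ∈ S := hST.resolve_left hSin
        rcases hXY with h2 | h2 <;> rcases hWZ with h4 | h4 <;>
          exact le_ncard_of_three (Set.toFinite _)
            ⟨hT, hgadmem 1⟩ ⟨h2, hgadmem _⟩ ⟨h4, hgadmem _⟩
            (by simp) (by simp) (by simp)
      exact ⟨base, hbdom, by omega⟩
    case pos =>
      obtain ⟨b, hbn, hadj, hswap⟩ := hcs gS hSin
      rcases nbr_S hadj with rfl | ⟨u₀, rfl⟩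
      · -- replacement is t
        have hbdom : IsDomSet G base := by
          intro v hv
          have hvS : (Sum.inl v : V ⊕ V ⊕ Fin 6) ∉ S \ {gS} ∪ {gT} := by
            rintro (⟨h, -⟩ | h)
            · exact hv (Or.inl h)
            · simp at h
          obtain ⟨c, hc, hadj'⟩ := hswap _ hvS
          rcases nbr_L hadj' with ⟨u, rfl, huv⟩ | rfl | rfl
          · rcases hc with ⟨hc, -⟩ | hc
            · exact ⟨u, Or.inl hc, huv⟩
            · simp at hc
          · rcases hc with ⟨hc, -⟩ | hc
            · exact absurd hc (fun h => hv (Or.inr hc))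
            · simp at hc
          · rcases hc with ⟨-, hc⟩ | hc
            · exact absurd rfl hc
            · simp at hc
        have h3 : 3 ≤ (S ∩ Gad).ncard := by
          rcases hXY with h2 | h2 <;> rcases hWZ with h4 | h4 <;>
            exact le_ncard_of_three (Set.toFinite _)
              ⟨hSin, hgadmem 0⟩ ⟨h2, hgadmem _⟩ ⟨h4, hgadmem _⟩
              (by simp) (by simp) (by simp)
        exact ⟨base, hbdom, by omega⟩
      · -- replacement is some original vertex u₀; then t ∈ S
        have hTS : (gT : V ⊕ V ⊕ Fin 6) ∈ S := by
          by_contra hT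
          have hTn : (gT : V ⊕ V ⊕ Fin 6) ∉ S \ {gS} ∪ {Sum.inl u₀} := by
            rintro (⟨h, -⟩ | h)
            · exact hT h
            · simp at h
          obtain ⟨c, hc, hadj'⟩ := hswap _ hTn
          have := nbr_T hadj'
          subst this
          rcases hc with ⟨-, hc⟩ | hc
          · exact absurd rfl hc
          · simp at hc
        have hbdom : IsDomSet G (insert u₀ base) := by
          intro v hv
          have hv1 : v ≠ u₀ := fun h => hv (h ▸ Set.mem_insert _ _)
          have hv2 : v ∉ base := fun h => hv (Set.mem_insert_of_mem _ h)
          have hvS : (Sum.inl v : V ⊕ V ⊕ Fin 6) ∉ S \ {gS} ∪ {Sum.inl u₀} := by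
            rintro (⟨h, -⟩ | h)
            · exact hv2 (Or.inl h)
            · rw [Set.mem_singleton_iff] at h
              exact hv1 (Sum.inl.injEq _ _ ▸ h)
          obtain ⟨c, hc, hadj'⟩ := hswap _ hvS
          rcases nbr_L hadj' with ⟨u, rfl, huv⟩ | rfl | rfl
          · rcases hc with ⟨hc, -⟩ | hc
            · exact ⟨u, Set.mem_insert_of_mem _ (Or.inl hc), huv⟩
            · rw [Set.mem_singleton_iff] at hc
              obtain rfl : u = u₀ := Sum.inl.injEq _ _ ▸ hc
              exact ⟨u, Set.mem_insert _ _, huv⟩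
          · rcases hc with ⟨hc, -⟩ | hc
            · exact absurd hc (fun h => hv2 (Or.inr hc))
            · simp at hc
          · rcases hc with ⟨-, hc⟩ | hc
            · exact absurd rfl hc
            · simp at hc
        have h4 : 4 ≤ (S ∩ Gad).ncard := by
          rcases hXY with h2 | h2 <;> rcases hWZ with h4 | h4 <;>
            exact le_ncard_of_four (Set.toFinite _)
              ⟨hSin, hgadmem 0⟩ ⟨hTS, hgadmem 1⟩ ⟨h2, hgadmem _⟩ ⟨h4, hgadmem _⟩
              (by simp) (by simp) (by simp) (by simp) (by simp) (by simp)
        have hins : (insert u₀ base).ncard ≤ base.ncard + 1 := Set.ncard_insert_le _ _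
        exact ⟨insert u₀ base, hbdom, by omega⟩
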